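/- The measure ν and Lebesgue measure restricted to (0,1) are mutually singular: there exists a Borel set Y ⊆ (0,1) with ℓ((0,1) \ Y) = 0 and ν(Y) = 0. -/

import Mathlib

open MeasureTheory
open Filter Topology

/-- The Gauss map `G(x) = 1/x - ⌊1/x⌋`. -/
noncomputable def gaussMap (x : ℝ) : ℝ := Int.fract x⁻¹

/-- The `m`-th continued fraction digit `a_m(x) = ⌊1 / G^{m-1}(x)⌋` (for `m ≥ 1`). -/
noncomputable def cfDigit (m : ℕ) (x : ℝ) : ℤ := ⌊(gaussMap^[m - 1] x)⁻¹⌋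

/-- `ν` is the harmonic measure of the nearest-neighbour non-backtracking random walk
on the trivalent tree dual to the Farey graph: the pushforward under the continued
fraction map `Φ` of the product over `i ≥ 1` of the measures `μ₀({k}) = 2^{-k}` on
the positive integers.  Equivalently, `ν` is a Borel probability measure giving each
cylinder set `{x ∈ (0,1) : x irrational, a_i(x) = b_i for 1 ≤ i ≤ k}` the measure
`∏_{i=1}^{k} 2^{-b_i}`. -/
def IsCFHarmonicMeasure (ν : Measure ℝ) : Prop :=
  IsProbabilityMeasure ν ∧
  ∀ (k : ℕ) (b : Fin k → ℕ), (∀ i, 1 ≤ b i) →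
    ν {x | x ∈ Set.Ioo (0 : ℝ) 1 ∧ Irrational x ∧
          ∀ i : Fin k, cfDigit ((i : ℕ) + 1) x = (b i : ℤ)}
      = ∏ i, (2 : ENNReal)⁻¹ ^ (b i)

/-! ### Basic facts about the Gauss map and digits -/

lemma gaussMap_mem {x : ℝ} (hx : x ∈ Set.Ioo (0:ℝ) 1) (hirr : Irrational x) :
    gaussMap x ∈ Set.Ioo (0:ℝ) 1 ∧ Irrational (gaussMap x) := by
  have hinv : Irrational x⁻¹ := hirr.inv
  have hfr : Irrational (gaussMap x) := by
    unfold gaussMap Int.fract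
    exact hinv.sub_intCast _
  refine ⟨⟨?_, ?_⟩, hfr⟩
  · exact lt_of_le_of_ne (Int.fract_nonneg x⁻¹) (Ne.symm hfr.ne_zero)
  · exact Int.fract_lt_one _

lemma iterate_gaussMap_mem {x : ℝ} (hx : x ∈ Set.Ioo (0:ℝ) 1) (hirr : Irrational x) :
    ∀ i, gaussMap^[i] x ∈ Set.Ioo (0:ℝ) 1 ∧ Irrational (gaussMap^[i] x) := by
  intro i
  induction i with
  | zero => exact ⟨hx, hirr⟩
  | succ n ih =>
      rw [Function.iterate_succ_apply']
      exact gaussMap_mem ih.1 ih.2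

lemma one_le_floor_inv {x : ℝ} (hx : x ∈ Set.Ioo (0:ℝ) 1) : 1 ≤ ⌊x⁻¹⌋ := by
  have : (1:ℝ) ≤ x⁻¹ := le_of_lt ((one_lt_inv_iff₀).mpr ⟨hx.1, hx.2⟩)
  exact_mod_cast Int.le_floor.mpr (by exact_mod_cast this)

lemma cfDigit_succ_eq (i : ℕ) (x : ℝ) : cfDigit (i + 1) x = ⌊(gaussMap^[i] x)⁻¹⌋ := by
  simp [cfDigit]

lemma one_le_cfDigit {x : ℝ} (hx : x ∈ Set.Ioo (0:ℝ) 1) (hirr : Irrational x) (i : ℕ) :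
    1 ≤ cfDigit (i + 1) x := by
  rw [cfDigit_succ_eq]
  exact one_le_floor_inv (iterate_gaussMap_mem hx hirr i).1

lemma measurable_gaussMap : Measurable gaussMap :=
  measurable_fract.comp measurable_inv

lemma measurable_digfun (i : ℕ) : Measurable (fun y : ℝ => ⌊(gaussMap^[i] y)⁻¹⌋) :=
  ((measurable_gaussMap.iterate i).inv).floor

lemma measurableSet_irrational : MeasurableSet {x : ℝ | Irrational x} := by
  have : {x : ℝ | Irrational x} = (Set.range ((↑) : ℚ → ℝ))ᶜ := rfl
  rw [this]
  exact ((Set.countable_range _).measurableSet).compl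

/-! ### Sums over tuples of digits -/

open scoped ENNReal Classical

lemma tail_geom : ∀ m : ℕ, ∑' v : ℕ, (if m ≤ v then ((2:ℝ≥0∞)⁻¹)^v else 0) = 2⁻¹ ^ m * 2 := by
  intro m
  induction m with
  | zero =>
      simp only [Nat.zero_le, if_true, pow_zero, one_mul]
      rw [ENNReal.tsum_geometric]
      norm_num
  | succ n ih =>
      have key : ∀ v : ℕ, (if n ≤ v then ((2:ℝ≥0∞)⁻¹)^v else 0)
          = (if n + 1 ≤ v then ((2:ℝ≥0∞)⁻¹)^v else 0) + (if v = n then ((2:ℝ≥0∞)⁻¹)^n else 0) := by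
        intro v
        rcases Nat.lt_trichotomy v n with h | h | h
        · simp [Nat.not_le.mpr h, Nat.not_le.mpr (Nat.lt_succ_of_lt h), Nat.ne_of_lt h]
        · simp [h]
        · simp [Nat.le_of_lt h, Nat.succ_le_of_lt h, Nat.ne_of_gt h]
      have hsum : (2:ℝ≥0∞)⁻¹ ^ n * 2
          = (∑' v : ℕ, (if n + 1 ≤ v then ((2:ℝ≥0∞)⁻¹)^v else 0)) + 2⁻¹ ^ n := by
        rw [← ih, tsum_congr key, ENNReal.summable.tsum_add ENNReal.summable, tsum_ite_eq]
      have h2 : (2:ℝ≥0∞)⁻¹ ^ n * 2 = (2:ℝ≥0∞)⁻¹ ^ n + 2⁻¹ ^ n := by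
        rw [mul_two]
      have hfin : (2:ℝ≥0∞)⁻¹ ^ n ≠ ∞ := by
        exact ENNReal.pow_ne_top (by simp)
      have : (∑' v : ℕ, (if n + 1 ≤ v then ((2:ℝ≥0∞)⁻¹)^v else 0)) = 2⁻¹ ^ n := by
        have h3 : (2:ℝ≥0∞)⁻¹ ^ n + (∑' v : ℕ, (if n + 1 ≤ v then ((2:ℝ≥0∞)⁻¹)^v else 0))
            = 2⁻¹ ^ n + 2⁻¹ ^ n := by
          rw [add_comm, ← hsum, h2]
        exact (ENNReal.add_right_inj hfin).mp h3
      rw [this, pow_succ, mul_assoc, ENNReal.inv_mul_cancel (by norm_num) (by norm_num), mul_one]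

lemma tsum_pi_prod : ∀ (k : ℕ) (f : Fin k → ℕ → ℝ≥0∞),
    ∑' b : Fin k → ℕ, ∏ i, f i (b i) = ∏ i, ∑' v, f i v := by
  intro k
  induction k with
  | zero =>
      intro f
      rw [tsum_eq_single (fun _ => 0) (by intro b' hb'; exact absurd (Subsingleton.elim b' _) hb')]
      simp
  | succ n ih =>
      intro f
      have he : ∑' b : Fin (n+1) → ℕ, ∏ i, f i (b i)
          = ∑' p : ℕ × (Fin n → ℕ), ∏ i, f i (((Fin.consEquiv (fun _ : Fin (n+1) => ℕ)) p) i) :=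
        ((Fin.consEquiv (fun _ : Fin (n+1) => ℕ)).tsum_eq _).symm
      rw [he]
      have hp : ∀ p : ℕ × (Fin n → ℕ),
          ∏ i, f i (((Fin.consEquiv (fun _ : Fin (n+1) => ℕ)) p) i)
            = f 0 p.1 * ∏ i : Fin n, f i.succ (p.2 i) := by
        intro p
        rw [Fin.prod_univ_succ]
        simp [Fin.consEquiv]
      rw [tsum_congr hp, ENNReal.tsum_prod']
      simp only [ENNReal.tsum_mul_left]
      rw [ENNReal.tsum_mul_right, ih (fun i => f i.succ), Fin.prod_univ_succ]

lemma nu_digit_tail {ν : Measure ℝ} (hν : IsCFHarmonicMeasure ν) (i m : ℕ) (hm : 1 ≤ m) :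
    ν {x | x ∈ Set.Ioo (0:ℝ) 1 ∧ Irrational x ∧ (m:ℤ) ≤ cfDigit (i+1) x} ≤ 2⁻¹ ^ m * 2 := by
  classical
  set S := {x | x ∈ Set.Ioo (0:ℝ) 1 ∧ Irrational x ∧ (m:ℤ) ≤ cfDigit (i+1) x} with hS
  set cond : (Fin (i+1) → ℕ) → Prop :=
    fun b => (∀ j, 1 ≤ b j) ∧ m ≤ b (Fin.last i) with hcond
  set C : (Fin (i+1) → ℕ) → Set ℝ := fun b =>
    {x | (x ∈ Set.Ioo (0 : ℝ) 1 ∧ Irrational x ∧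
        ∀ j : Fin (i+1), cfDigit ((j : ℕ) + 1) x = (b j : ℤ)) ∧ cond b} with hC
  have hcover : S ⊆ ⋃ b, C b := by
    intro x hx
    obtain ⟨hx1, hx2, hx3⟩ := hx
    set b : Fin (i+1) → ℕ := fun j => (cfDigit ((j : ℕ)+1) x).toNat with hb
    have hpos : ∀ j : Fin (i+1), 1 ≤ cfDigit ((j : ℕ)+1) x :=
      fun j => one_le_cfDigit hx1 hx2 _
    have hbval : ∀ j : Fin (i+1), (b j : ℤ) = cfDigit ((j : ℕ)+1) x := by
      intro j; simp only [hb]; exact Int.toNat_of_nonneg (le_trans zero_le_one (hpos j))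
    have hcondb : cond b := by
      constructor
      · intro j
        have := hpos j
        have := hbval j
        omega
      · have h1 : (b (Fin.last i) : ℤ) = cfDigit (i+1) x := by
          have := hbval (Fin.last i)
          simpa [Fin.val_last] using this
        omega
    exact Set.mem_iUnion.mpr ⟨b, ⟨⟨hx1, hx2, fun j => (hbval j).symm⟩, hcondb⟩⟩
  have hle : ν S ≤ ∑' b : Fin (i+1) → ℕ, ν (C b) :=
    le_trans (measure_mono hcover) (measure_iUnion_le _)
  set f : Fin (i+1) → ℕ → ℝ≥0∞ := fun j v =>
    if 1 ≤ v ∧ (j = Fin.last i → m ≤ v) then (2:ℝ≥0∞)⁻¹ ^ v else 0 with hf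
  have hCb : ∀ b, ν (C b) ≤ ∏ j, f j (b j) := by
    intro b
    by_cases hc : cond b
    · have hCeq : C b = {x | x ∈ Set.Ioo (0 : ℝ) 1 ∧ Irrational x ∧
          ∀ j : Fin (i+1), cfDigit ((j : ℕ) + 1) x = (b j : ℤ)} := by
        rw [hC]; ext x; exact ⟨fun h => h.1, fun h => ⟨h, hc⟩⟩
      rw [hCeq, hν.2 (i+1) b hc.1]
      refine le_of_eq (Finset.prod_congr rfl ?_)
      intro j _
      rw [hf]
      have hj : 1 ≤ b j ∧ (j = Fin.last i → m ≤ b j) := by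
        refine ⟨hc.1 j, fun hj => ?_⟩
        rw [hj]; exact hc.2
      simp only []
      rw [if_pos hj]
    · have hCeq : C b = ∅ := by
        rw [hC]; ext x; simp [hc]
      rw [hCeq]
      simp
  have hsum : ∑' b : Fin (i+1) → ℕ, ν (C b) ≤ ∏ j : Fin (i+1), ∑' v, f j v := by
    rw [← tsum_pi_prod]
    exact ENNReal.tsum_le_tsum hCb
  have hfactor : ∀ j : Fin (i+1), ∑' v, f j v ≤ if j = Fin.last i then 2⁻¹ ^ m * 2 else 1 := by
    intro j
    by_cases hj : j = Fin.last i
    · simp only [hj, if_true]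
      refine le_of_eq ?_
      rw [← tail_geom m]
      refine tsum_congr fun v => ?_
      rw [hf]
      by_cases hv : m ≤ v
      · simp [hv, le_trans hm hv]
      · simp [hv]
    · simp only [hj, if_false]
      have heq : ∑' v, f j v = ∑' v : ℕ, (if 1 ≤ v then ((2:ℝ≥0∞)⁻¹)^v else 0) := by
        refine tsum_congr fun v => ?_
        rw [hf]
        simp [hj]
      rw [heq, tail_geom 1]
      norm_num
  calc ν S ≤ ∑' b : Fin (i+1) → ℕ, ν (C b) := hle
    _ ≤ ∏ j : Fin (i+1), ∑' v, f j v := hsum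
    _ ≤ ∏ j : Fin (i+1), (if j = Fin.last i then 2⁻¹ ^ m * 2 else 1) :=
        Finset.prod_le_prod' fun j _ => hfactor j
    _ = 2⁻¹ ^ m * 2 := by
        rw [Finset.prod_ite_eq' Finset.univ (Fin.last i) (fun _ => (2:ℝ≥0∞)⁻¹ ^ m * 2)]
        simp

/-! ### Lebesgue side: a transfer-operator estimate -/

lemma lintegral_image_eq_lintegral_abs_deriv_mul' {s : Set ℝ} {f f' : ℝ → ℝ}
    (hs : MeasurableSet s) (hf' : ∀ x ∈ s, HasDerivWithinAt f (f' x) s x)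
    (hf : Set.InjOn f s) (g : ℝ → ℝ≥0∞) :
    ∫⁻ x in f '' s, g x = ∫⁻ x in s, ENNReal.ofReal |f' x| * g (f x) := by
  simpa only [ContinuousLinearMap.det_toSpanSingleton] using
    lintegral_image_eq_lintegral_abs_det_fderiv_mul volume hs
      (fun x hx => (hf' x hx).hasFDerivWithinAt) hf g

/-- The set of points of `(0,1)` that are irrational with all of the first `n`
continued fraction digits at most `D`. -/
def digSet (D n : ℕ) : Set ℝ :=
  {y | y ∈ Set.Ioo (0:ℝ) 1 ∧ Irrational y ∧ ∀ i < n, ⌊(gaussMap^[i] y)⁻¹⌋ ≤ (D:ℤ)}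

lemma measurableSet_digSet (D n : ℕ) : MeasurableSet (digSet D n) := by
  have : digSet D n = (Set.Ioo (0:ℝ) 1 ∩ {y | Irrational y}) ∩
      ⋂ (i : ℕ) (_ : i < n), {y : ℝ | ⌊(gaussMap^[i] y)⁻¹⌋ ≤ (D:ℤ)} := by
    ext y
    simp only [digSet, Set.mem_setOf_eq, Set.mem_inter_iff, Set.mem_iInter]
    tauto
  rw [this]
  refine (measurableSet_Ioo.inter measurableSet_irrational).inter ?_
  exact MeasurableSet.iInter fun i => MeasurableSet.iInter fun _ =>
    (measurable_digfun i) (MeasurableSet.of_discrete (s := {z : ℤ | z ≤ (D:ℤ)}))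

lemma telescope_le {u : ℝ} (hu0 : 0 < u) (hu1 : u < 1) (D : ℕ) :
    ∑ b ∈ Finset.Icc 1 D, (((b:ℝ)+u)*((b:ℝ)+u+1))⁻¹ ≤ ((D:ℝ)/((D:ℝ)+1)) * (1+u)⁻¹ := by
  have htel : ∀ E : ℕ, ∑ b ∈ Finset.Icc 1 E, (((b:ℝ)+u)*((b:ℝ)+u+1))⁻¹
      = (1+u)⁻¹ - ((E:ℝ)+1+u)⁻¹ := by
    intro E
    induction E with
    | zero => simp
    | succ n ih =>
        rw [Finset.sum_Icc_succ_top (by omega), ih]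
        have h1 : (0:ℝ) < (n:ℝ)+1+u := by positivity
        have h2 : (0:ℝ) < (n:ℝ)+2+u := by positivity
        have key : (((n:ℝ)+1+u)*((n:ℝ)+1+u+1))⁻¹ = ((n:ℝ)+1+u)⁻¹ - ((n:ℝ)+2+u)⁻¹ := by
          rw [eq_sub_iff_add_eq]
          field_simp
          ring
        push_cast
        rw [key]
        ring
  rw [htel D]
  have h1 : (0:ℝ) < 1+u := by positivity
  have h2 : (0:ℝ) < (D:ℝ)+1+u := by positivity
  have h3 : (0:ℝ) < (D:ℝ)+1 := by positivity
  have key : ((D:ℝ)+1)⁻¹ * (1+u)⁻¹ ≤ ((D:ℝ)+1+u)⁻¹ := by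
    rw [← mul_inv]
    refine inv_anti₀ h2 ?_
    nlinarith
  have hDd : ((D:ℝ)/((D:ℝ)+1)) = 1 - ((D:ℝ)+1)⁻¹ := by
    field_simp
    ring
  rw [hDd, sub_mul, one_mul]
  linarith

/-- The transfer-operator weight function. -/
noncomputable def gfun (y : ℝ) : ℝ≥0∞ := ENNReal.ofReal ((1+y)⁻¹)

lemma measurable_gfun : Measurable gfun :=
  ((measurable_const.add measurable_id).inv).ennreal_ofReal

lemma digSet_succ_subset (D n : ℕ) :
    digSet D (n+1) ⊆ ⋃ b : ℕ,
      (if 1 ≤ b ∧ b ≤ D then (fun u : ℝ => ((b:ℝ)+u)⁻¹) '' digSet D n else ∅) := by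
  intro y hy
  obtain ⟨hy1, hy2, hy3⟩ := hy
  have hy0 : y ≠ 0 := ne_of_gt hy1.1
  set b : ℕ := ⌊y⁻¹⌋.toNat with hb
  have hfl1 : 1 ≤ ⌊y⁻¹⌋ := one_le_floor_inv hy1
  have hbD : ⌊y⁻¹⌋ ≤ (D:ℤ) := by simpa using hy3 0 (Nat.succ_pos n)
  have hcond : 1 ≤ b ∧ b ≤ D := by omega
  have hbr : ((b:ℝ)) = ((⌊y⁻¹⌋ : ℤ) : ℝ) := by
    rw [hb]
    exact_mod_cast congrArg (fun z : ℤ => (z : ℝ)) (Int.toNat_of_nonneg (by omega))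
  have hu : gaussMap y ∈ digSet D n := by
    obtain ⟨hmem, hirr⟩ := gaussMap_mem hy1 hy2
    refine ⟨hmem, hirr, fun i hi => ?_⟩
    have : gaussMap^[i] (gaussMap y) = gaussMap^[i+1] y :=
      (Function.iterate_succ_apply gaussMap i y).symm
    rw [this]
    exact hy3 (i+1) (by omega)
  have hyeq : y = ((b:ℝ) + gaussMap y)⁻¹ := by
    have : (b:ℝ) + gaussMap y = y⁻¹ := by
      rw [hbr]
      unfold gaussMap Int.fract
      ring
    rw [this, inv_inv]
  refine Set.mem_iUnion.mpr ⟨b, ?_⟩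
  rw [if_pos hcond]
  exact ⟨gaussMap y, hu, hyeq.symm⟩

lemma step_bound (D n : ℕ) :
    ∫⁻ y in digSet D (n+1), gfun y
      ≤ ENNReal.ofReal ((D:ℝ)/((D:ℝ)+1)) * ∫⁻ y in digSet D n, gfun y := by
  classical
  set V := digSet D n with hV
  have hVmeas : MeasurableSet V := measurableSet_digSet D n
  set T : ℕ → Set ℝ := fun b =>
    (if 1 ≤ b ∧ b ≤ D then (fun u : ℝ => ((b:ℝ)+u)⁻¹) '' V else ∅) with hT
  have h1 : ∫⁻ y in digSet D (n+1), gfun y ≤ ∑' b : ℕ, ∫⁻ y in T b, gfun y :=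
    le_trans (lintegral_mono_set (digSet_succ_subset D n)) (lintegral_iUnion_le _ _)
  -- each branch integral
  have hbranch : ∀ b : ℕ, 1 ≤ b → b ≤ D →
      ∫⁻ y in (fun u : ℝ => ((b:ℝ)+u)⁻¹) '' V, gfun y
        = ∫⁻ u in V, ENNReal.ofReal ((((b:ℝ)+u)*((b:ℝ)+u+1))⁻¹) := by
    intro b hb1 _
    have hpos : ∀ u : ℝ, u ∈ V → (0:ℝ) < (b:ℝ) + u := by
      intro u hu
      have : (0:ℝ) < u := hu.1.1
      have : (1:ℝ) ≤ (b:ℝ) := by exact_mod_cast hb1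
      linarith [hu.1.1]
    have hderiv : ∀ u ∈ V, HasDerivWithinAt (fun u : ℝ => ((b:ℝ)+u)⁻¹)
        (-((((b:ℝ)+u)^2)⁻¹)) V u := by
      intro u hu
      have hne : (b:ℝ) + u ≠ 0 := ne_of_gt (hpos u hu)
      have h := ((hasDerivAt_id u).const_add (b:ℝ)).inv hne
      simp only [id_eq] at h
      have heq : -1 / ((b:ℝ)+u)^2 = -((((b:ℝ)+u)^2)⁻¹) := by ring
      rw [heq] at h
      exact h.hasDerivWithinAt
    have hinj : Set.InjOn (fun u : ℝ => ((b:ℝ)+u)⁻¹) V := by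
      intro u1 h1 u2 h2 he
      have := inv_injective he
      linarith [this]
    rw [lintegral_image_eq_lintegral_abs_deriv_mul' hVmeas hderiv hinj gfun]
    refine setLIntegral_congr_fun hVmeas ?_
    intro u hu
    have hbu : (0:ℝ) < (b:ℝ) + u := hpos u hu
    have habs : |(-((((b:ℝ)+u)^2)⁻¹))| = (((b:ℝ)+u)^2)⁻¹ := by
      rw [abs_neg, abs_of_nonneg]
      positivity
    beta_reduce
    rw [habs]
    unfold gfun
    rw [← ENNReal.ofReal_mul (by positivity)]
    congr 1
    have h2 : (1 + ((b:ℝ)+u)⁻¹) = (((b:ℝ)+u+1))/((b:ℝ)+u) := by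
      field_simp
    rw [h2]
    rw [inv_div]
    field_simp
  -- bound the tsum by a finite sum
  have h2 : ∑' b : ℕ, ∫⁻ y in T b, gfun y
      = ∑ b ∈ Finset.Icc 1 D, ∫⁻ u in V, ENNReal.ofReal ((((b:ℝ)+u)*((b:ℝ)+u+1))⁻¹) := by
    rw [tsum_eq_sum (s := Finset.Icc 1 D) ?_]
    · refine Finset.sum_congr rfl fun b hb => ?_
      rw [hT]
      simp only []
      rw [if_pos (by simpa using Finset.mem_Icc.mp hb)]
      exact hbranch b (Finset.mem_Icc.mp hb).1 (Finset.mem_Icc.mp hb).2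
    · intro b hb
      rw [hT]
      simp only []
      rw [if_neg (fun hc => hb (Finset.mem_Icc.mpr hc))]
      simp
  have h3 : ∑ b ∈ Finset.Icc 1 D, ∫⁻ u in V, ENNReal.ofReal ((((b:ℝ)+u)*((b:ℝ)+u+1))⁻¹)
      = ∫⁻ u in V, ∑ b ∈ Finset.Icc 1 D, ENNReal.ofReal ((((b:ℝ)+u)*((b:ℝ)+u+1))⁻¹) := by
    rw [lintegral_finset_sum]
    intro b _
    refine Measurable.ennreal_ofReal ?_
    exact (((measurable_const.add measurable_id).mul
      ((measurable_const.add measurable_id).add measurable_const))).inv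
  have h4 : ∫⁻ u in V, ∑ b ∈ Finset.Icc 1 D, ENNReal.ofReal ((((b:ℝ)+u)*((b:ℝ)+u+1))⁻¹)
      ≤ ∫⁻ u in V, ENNReal.ofReal ((D:ℝ)/((D:ℝ)+1)) * gfun u := by
    refine setLIntegral_mono' hVmeas ?_
    intro u hu
    have hu0 : (0:ℝ) < u := hu.1.1
    have hu1 : u < 1 := hu.1.2
    have hsum : ∑ b ∈ Finset.Icc 1 D, ENNReal.ofReal ((((b:ℝ)+u)*((b:ℝ)+u+1))⁻¹)
        = ENNReal.ofReal (∑ b ∈ Finset.Icc 1 D, (((b:ℝ)+u)*((b:ℝ)+u+1))⁻¹) := by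
      rw [ENNReal.ofReal_sum_of_nonneg]
      intro b hb
      have : (0:ℝ) < (b:ℝ) + u := by
        have := (Finset.mem_Icc.mp hb).1
        have : (1:ℝ) ≤ (b:ℝ) := by exact_mod_cast this
        linarith
      positivity
    rw [hsum]
    unfold gfun
    rw [← ENNReal.ofReal_mul (by positivity)]
    exact ENNReal.ofReal_le_ofReal (telescope_le hu0 hu1 D)
  have h5 : ∫⁻ u in V, ENNReal.ofReal ((D:ℝ)/((D:ℝ)+1)) * gfun u
      = ENNReal.ofReal ((D:ℝ)/((D:ℝ)+1)) * ∫⁻ u in V, gfun u :=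
    lintegral_const_mul _ measurable_gfun
  calc ∫⁻ y in digSet D (n+1), gfun y ≤ ∑' b : ℕ, ∫⁻ y in T b, gfun y := h1
    _ = ∑ b ∈ Finset.Icc 1 D, ∫⁻ u in V, ENNReal.ofReal ((((b:ℝ)+u)*((b:ℝ)+u+1))⁻¹) := h2
    _ = ∫⁻ u in V, ∑ b ∈ Finset.Icc 1 D, ENNReal.ofReal ((((b:ℝ)+u)*((b:ℝ)+u+1))⁻¹) := h3
    _ ≤ ∫⁻ u in V, ENNReal.ofReal ((D:ℝ)/((D:ℝ)+1)) * gfun u := h4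
    _ = ENNReal.ofReal ((D:ℝ)/((D:ℝ)+1)) * ∫⁻ u in V, gfun u := h5

lemma volume_digSet_le (D n : ℕ) :
    volume (digSet D n) ≤ 2 * (ENNReal.ofReal ((D:ℝ)/((D:ℝ)+1)))^n := by
  have hF : ∀ n, ∫⁻ y in digSet D n, gfun y ≤ (ENNReal.ofReal ((D:ℝ)/((D:ℝ)+1)))^n := by
    intro n
    induction n with
    | zero =>
        simp only [pow_zero]
        calc ∫⁻ y in digSet D 0, gfun y ≤ ∫⁻ y in digSet D 0, 1 := by
              refine setLIntegral_mono' (measurableSet_digSet D 0) ?_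
              intro y hy
              unfold gfun
              refine le_trans (ENNReal.ofReal_le_ofReal ?_) (le_of_eq ENNReal.ofReal_one)
              rw [inv_le_one_iff₀]
              right
              linarith [hy.1.1]
          _ = volume (digSet D 0) := setLIntegral_one _
          _ ≤ volume (Set.Ioo (0:ℝ) 1) := measure_mono (fun y hy => hy.1)
          _ = 1 := by rw [Real.volume_Ioo]; norm_num
    | succ n ih =>
        calc ∫⁻ y in digSet D (n+1), gfun y
            ≤ ENNReal.ofReal ((D:ℝ)/((D:ℝ)+1)) * ∫⁻ y in digSet D n, gfun y := step_bound D n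
          _ ≤ ENNReal.ofReal ((D:ℝ)/((D:ℝ)+1)) * (ENNReal.ofReal ((D:ℝ)/((D:ℝ)+1)))^n :=
              mul_le_mul_right ih _
          _ = (ENNReal.ofReal ((D:ℝ)/((D:ℝ)+1)))^(n+1) := by rw [pow_succ]; ring
  calc volume (digSet D n) = ∫⁻ y in digSet D n, 1 := (setLIntegral_one _).symm
    _ ≤ ∫⁻ y in digSet D n, 2 * gfun y := by
        refine setLIntegral_mono' (measurableSet_digSet D n) ?_
        intro y hy
        unfold gfun
        have h2 : (2:ℝ≥0∞) * ENNReal.ofReal ((1+y)⁻¹) = ENNReal.ofReal (2 * (1+y)⁻¹) := by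
          rw [ENNReal.ofReal_mul (by norm_num)]
          norm_num
        rw [h2]
        refine le_trans (le_of_eq ENNReal.ofReal_one.symm) (ENNReal.ofReal_le_ofReal ?_)
        have h1y : (0:ℝ) < 1 + y := by linarith [hy.1.1]
        have h2y : (1:ℝ) + y ≤ 2 := by linarith [hy.1.2]
        have := inv_anti₀ h1y h2y
        linarith
    _ = 2 * ∫⁻ y in digSet D n, gfun y := lintegral_const_mul _ measurable_gfun
    _ ≤ 2 * (ENNReal.ofReal ((D:ℝ)/((D:ℝ)+1)))^n := mul_le_mul_right (hF n) _

/-! ### Putting everything together -/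

/-- The digit threshold sequence `M i = 2 log₂(i+1) + 2`. -/
def Mfun (i : ℕ) : ℕ := 2 * Nat.log 2 (i+1) + 2

lemma Mfun_mono {i j : ℕ} (h : i ≤ j) : Mfun i ≤ Mfun j := by
  unfold Mfun
  have := Nat.log_mono_right (b := 2) (Nat.add_le_add_right h 1)
  omega

lemma sq_le_two_pow : ∀ k : ℕ, 4 ≤ k → k^2 ≤ 2^k := by
  intro k hk
  induction k with
  | zero => omega
  | succ n ih =>
      rcases Nat.lt_or_ge n 4 with h | h
      · have hn3 : n = 3 := by omega
        subst hn3; norm_num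
      · have h1 := ih (by omega)
        have h2 : (n+1)^2 ≤ 2 * n^2 := by nlinarith
        calc (n+1)^2 ≤ 2 * n^2 := h2
          _ ≤ 2 * 2^n := by omega
          _ = 2^(n+1) := by ring

lemma sq_lt_two_pow_Mfun (i : ℕ) : (i+1)^2 ≤ 2^(Mfun i) := by
  have h1 : i + 1 < 2^(Nat.log 2 (i+1) + 1) := Nat.lt_pow_succ_log_self (by norm_num) (i+1)
  have h2 : (i+1)^2 ≤ (2^(Nat.log 2 (i+1) + 1))^2 := Nat.pow_le_pow_left (le_of_lt h1) 2
  calc (i+1)^2 ≤ (2^(Nat.log 2 (i+1) + 1))^2 := h2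
    _ = 2^(2 * Nat.log 2 (i+1) + 2) := by rw [← pow_mul]; ring_nf
    _ = 2^(Mfun i) := rfl

/-- The "bad" event at time `i`: the `(i+1)`-st digit exceeds `M i`. -/
def badSet (i : ℕ) : Set ℝ :=
  {x | x ∈ Set.Ioo (0:ℝ) 1 ∧ Irrational x ∧ ((Mfun i + 1 : ℕ) : ℤ) ≤ cfDigit (i+1) x}

lemma measurableSet_badSet (i : ℕ) : MeasurableSet (badSet i) := by
  have : badSet i = (Set.Ioo (0:ℝ) 1 ∩ {y | Irrational y}) ∩
      {x : ℝ | ((Mfun i + 1 : ℕ) : ℤ) ≤ ⌊(gaussMap^[i] x)⁻¹⌋} := by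
    ext x
    simp only [badSet, Set.mem_setOf_eq, Set.mem_inter_iff, cfDigit_succ_eq]
    tauto
  rw [this]
  exact (measurableSet_Ioo.inter measurableSet_irrational).inter
    ((measurable_digfun i) (MeasurableSet.of_discrete
      (s := {z : ℤ | ((Mfun i + 1 : ℕ) : ℤ) ≤ z})))

lemma nu_badSet_le {ν : Measure ℝ} (hν : IsCFHarmonicMeasure ν) (i : ℕ) :
    ν (badSet i) ≤ ENNReal.ofReal (1/((i:ℝ)+1)^2) := by
  have h1 : ν (badSet i) ≤ 2⁻¹ ^ (Mfun i + 1) * 2 :=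
    nu_digit_tail hν i (Mfun i + 1) (by omega)
  have h2 : (2:ℝ≥0∞)⁻¹ ^ (Mfun i + 1) * 2 = 2⁻¹ ^ (Mfun i) := by
    rw [pow_succ, mul_assoc, ENNReal.inv_mul_cancel (by norm_num) (by norm_num), mul_one]
  rw [h2] at h1
  refine le_trans h1 ?_
  have h3 : (2:ℝ≥0∞)⁻¹ = ENNReal.ofReal (2⁻¹) := by
    rw [ENNReal.ofReal_inv_of_pos (by norm_num)]
    norm_num
  rw [h3, ← ENNReal.ofReal_pow (by norm_num)]
  refine ENNReal.ofReal_le_ofReal ?_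
  have h4 : ((i:ℝ)+1)^2 ≤ (2:ℝ)^(Mfun i) := by
    have := sq_lt_two_pow_Mfun i
    exact_mod_cast this
  have h5 : (0:ℝ) < ((i:ℝ)+1)^2 := by positivity
  calc ((2:ℝ)⁻¹)^(Mfun i) = 1/(2:ℝ)^(Mfun i) := by
        rw [inv_pow, one_div]
    _ ≤ 1/((i:ℝ)+1)^2 := one_div_le_one_div_of_le h5 h4

/-- Points whose first `N` digits are at most `T` and whose later digits obey
the threshold `M`. -/
def tameSet (N T : ℕ) : Set ℝ :=
  {x | x ∈ Set.Ioo (0:ℝ) 1 ∧ Irrational x ∧ (∀ i < N, cfDigit (i+1) x ≤ (T:ℤ)) ∧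
    ∀ i, N ≤ i → cfDigit (i+1) x ≤ ((Mfun i : ℕ) : ℤ)}

lemma volume_tameSet (N T : ℕ) : volume (tameSet N T) = 0 := by
  have hsub : ∀ m : ℕ, tameSet N T ⊆ digSet (max T (Mfun m)) m := by
    intro m x hx
    refine ⟨hx.1, hx.2.1, fun i hi => ?_⟩
    rw [← cfDigit_succ_eq]
    rcases Nat.lt_or_ge i N with h | h
    · refine le_trans (hx.2.2.1 i h) ?_
      exact_mod_cast Int.ofNat_le.mpr (le_max_left T (Mfun m))
    · refine le_trans (hx.2.2.2 i h) ?_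
      exact_mod_cast Int.ofNat_le.mpr (le_trans (Mfun_mono (le_of_lt hi)) (le_max_right T (Mfun m)))
  have hbound : ∀ k : ℕ, 1 ≤ k →
      volume (tameSet N T) ≤ 2 * ENNReal.ofReal (Real.exp (-((2:ℝ)^k/((T:ℝ)+2*k+3)))) := by
    intro k hk
    set m : ℕ := 2^k with hm
    set D : ℕ := max T (Mfun m) with hD
    have hDk : (D:ℝ) + 1 ≤ (T:ℝ)+2*k+3 := by
      have h1 : 1 < 2^k := Nat.one_lt_pow (by omega) (by norm_num)
      have hlog : Nat.log 2 (2^k + 1) ≤ k := by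
        have h2 : 2^k + 1 < 2^(k+1) := by
          rw [pow_succ]
          omega
        have := Nat.log_lt_of_lt_pow (by omega) h2
        omega
      have hM : Mfun m ≤ 2*k + 2 := by
        rw [hm]
        unfold Mfun
        omega
      have hDnat : D ≤ T + 2*k + 2 := by
        rw [hD]
        exact max_le (by omega) (by omega)
      have : (D:ℝ) ≤ (T:ℝ) + 2*k + 2 := by exact_mod_cast hDnat
      linarith
    have hDpos : (0:ℝ) < (D:ℝ) + 1 := by positivity
    have hTk : (0:ℝ) < (T:ℝ)+2*k+3 := by positivity
    have hr0 : (0:ℝ) ≤ (D:ℝ)/((D:ℝ)+1) := by positivity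
    have hrexp : (D:ℝ)/((D:ℝ)+1) ≤ Real.exp (-(((D:ℝ)+1)⁻¹)) := by
      have h1 := Real.add_one_le_exp (-(((D:ℝ)+1)⁻¹))
      have h2 : (D:ℝ)/((D:ℝ)+1) = 1 - ((D:ℝ)+1)⁻¹ := by
        field_simp
        ring
      linarith
    have hpow : ((D:ℝ)/((D:ℝ)+1))^m ≤ Real.exp (-((m:ℝ)/((D:ℝ)+1))) := by
      calc ((D:ℝ)/((D:ℝ)+1))^m ≤ (Real.exp (-(((D:ℝ)+1)⁻¹)))^m :=
            pow_le_pow_left₀ hr0 hrexp m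
        _ = Real.exp ((m:ℝ) * (-(((D:ℝ)+1)⁻¹))) := (Real.exp_nat_mul _ m).symm
        _ = Real.exp (-((m:ℝ)/((D:ℝ)+1))) := by
            congr 1
            field_simp
    have hmono : Real.exp (-((m:ℝ)/((D:ℝ)+1))) ≤ Real.exp (-((2:ℝ)^k/((T:ℝ)+2*k+3))) := by
      refine Real.exp_le_exp.mpr ?_
      have hmr : ((m:ℕ):ℝ) = (2:ℝ)^k := by
        rw [hm]
        push_cast
        ring
      rw [hmr]
      have h2k : (0:ℝ) ≤ (2:ℝ)^k := by positivity
      have := div_le_div_of_nonneg_left h2k hDpos hDk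
      linarith
    calc volume (tameSet N T) ≤ volume (digSet D m) := measure_mono (hsub m)
      _ ≤ 2 * (ENNReal.ofReal ((D:ℝ)/((D:ℝ)+1)))^m := volume_digSet_le D m
      _ = 2 * ENNReal.ofReal (((D:ℝ)/((D:ℝ)+1))^m) := by
          rw [ENNReal.ofReal_pow hr0]
      _ ≤ 2 * ENNReal.ofReal (Real.exp (-((2:ℝ)^k/((T:ℝ)+2*k+3)))) := by
          exact mul_le_mul_right (ENNReal.ofReal_le_ofReal (le_trans hpow hmono)) 2
  -- the bound tends to `0`
  have hdiv : Filter.Tendsto (fun k : ℕ => (2:ℝ)^k/((T:ℝ)+2*k+3)) Filter.atTop Filter.atTop := by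
    have hbase : Filter.Tendsto (fun k : ℕ => (k:ℝ)/((T:ℝ)+5)) Filter.atTop Filter.atTop :=
      tendsto_natCast_atTop_atTop.atTop_div_const (by positivity)
    refine Filter.tendsto_atTop_mono' _ ?_ hbase
    filter_upwards [Filter.eventually_ge_atTop 4] with k hk
    have hk0 : (0:ℝ) < (k:ℝ) := by
      have : (0:ℕ) < k := by omega
      exact_mod_cast this
    have hsq : ((k:ℝ))^2 ≤ (2:ℝ)^k := by
      have := sq_le_two_pow k hk
      exact_mod_cast this
    have hden : (T:ℝ)+2*k+3 ≤ ((T:ℝ)+5)*k := by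
      have h1 : (1:ℝ) ≤ (k:ℝ) := by
        have : (1:ℕ) ≤ k := by omega
        exact_mod_cast this
      have hT0 : (0:ℝ) ≤ (T:ℝ) := Nat.cast_nonneg T
      nlinarith
    have heq : (k:ℝ)/((T:ℝ)+5) = ((k:ℝ))^2/(((T:ℝ)+5)*k) := by
      rw [eq_div_iff (by positivity)]
      field_simp
    rw [heq]
    exact div_le_div₀ (by positivity) hsq (by positivity) hden
  have hexp : Filter.Tendsto
      (fun k : ℕ => 2 * ENNReal.ofReal (Real.exp (-((2:ℝ)^k/((T:ℝ)+2*k+3)))))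
      Filter.atTop (𝓝 0) := by
    have h1 : Filter.Tendsto (fun k : ℕ => Real.exp (-((2:ℝ)^k/((T:ℝ)+2*k+3))))
        Filter.atTop (𝓝 0) :=
      Real.tendsto_exp_atBot.comp (Filter.tendsto_neg_atTop_atBot.comp hdiv)
    have h2 := ENNReal.tendsto_ofReal h1
    rw [ENNReal.ofReal_zero] at h2
    have h3 := ENNReal.Tendsto.const_mul h2 (Or.inr (by norm_num : (2:ℝ≥0∞) ≠ ⊤))
    rwa [mul_zero] at h3
  have : volume (tameSet N T) ≤ 0 := by
    refine ge_of_tendsto hexp ?_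
    filter_upwards [Filter.eventually_ge_atTop 1] with k hk
    exact hbound k hk
  exact le_antisymm this zero_le

/-- The harmonic measure `ν` and Lebesgue measure restricted to `(0,1)` are mutually
singular: there is a Borel set `Y ⊆ (0,1)` of full Lebesgue measure in `(0,1)` and
zero harmonic measure. -/
theorem harmonic_measure_singular (ν : Measure ℝ) (hν : IsCFHarmonicMeasure ν) :
    ∃ Y : Set ℝ, Y ⊆ Set.Ioo (0 : ℝ) 1 ∧ MeasurableSet Y ∧
      volume (Set.Ioo (0 : ℝ) 1 \ Y) = 0 ∧ ν Y = 0 := by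
  haveI := hν.1
  set L : Set ℝ := ⋂ N : ℕ, ⋃ k : ℕ, badSet (k + N) with hL
  have hLmeas : MeasurableSet L :=
    MeasurableSet.iInter fun N => MeasurableSet.iUnion fun k => measurableSet_badSet _
  have hIrrMeas : MeasurableSet (Set.Ioo (0:ℝ) 1 ∩ {x | Irrational x}) :=
    measurableSet_Ioo.inter measurableSet_irrational
  set Z : Set ℝ := (Set.Ioo (0:ℝ) 1 ∩ {x | Irrational x}) \ L with hZ
  have hZmeas : MeasurableSet Z := hIrrMeas.diff hLmeas
  refine ⟨Set.Ioo 0 1 \ Z, Set.diff_subset, measurableSet_Ioo.diff hZmeas, ?_, ?_⟩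
  · have hZIoo : Z ⊆ Set.Ioo (0:ℝ) 1 := fun x hx => hx.1.1
    have h1 : Set.Ioo (0:ℝ) 1 \ (Set.Ioo (0:ℝ) 1 \ Z) = Z := by
      ext x
      constructor
      · rintro ⟨hx1, hx2⟩
        by_contra h
        exact hx2 ⟨hx1, h⟩
      · intro hx
        exact ⟨hZIoo hx, fun h => h.2 hx⟩
    rw [h1]
    have hcover : Z ⊆ ⋃ N : ℕ, ⋃ T : ℕ, tameSet N T := by
      intro x hx
      obtain ⟨⟨hx1, hx2⟩, hx3⟩ := hx
      rw [hL] at hx3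
      simp only [Set.mem_iInter, Set.mem_iUnion, not_forall, not_exists] at hx3
      obtain ⟨N, hN⟩ := hx3
      set T : ℕ := (Finset.range N).sup (fun i => (cfDigit (i+1) x).toNat) with hT
      refine Set.mem_iUnion.mpr ⟨N, Set.mem_iUnion.mpr ⟨T, hx1, hx2, ?_, ?_⟩⟩
      · intro i hi
        refine le_trans (Int.self_le_toNat _) ?_
        exact_mod_cast Int.ofNat_le.mpr
          (Finset.le_sup (f := fun i => (cfDigit (i+1) x).toNat) (Finset.mem_range.mpr hi))
      · intro i hi
        have hk := hN (i - N)
        have hkN : i - N + N = i := by omega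
        rw [hkN] at hk
        by_contra hcon
        exact hk ⟨hx1, hx2, by omega⟩
    have hnull : volume (⋃ N : ℕ, ⋃ T : ℕ, tameSet N T) = 0 :=
      measure_iUnion_null fun N => measure_iUnion_null fun T => volume_tameSet N T
    exact le_antisymm (le_trans (measure_mono hcover) (le_of_eq hnull)) zero_le
  · have hIrrOne : ν (Set.Ioo (0:ℝ) 1 ∩ {x | Irrational x}) = 1 := by
      have h0 := hν.2 0 (fun _ => 1) (fun i => le_refl 1)
      have hset : {x : ℝ | x ∈ Set.Ioo (0:ℝ) 1 ∧ Irrational x ∧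
          ∀ i : Fin 0, cfDigit ((i:ℕ)+1) x = (((fun _ => 1) i : ℕ) : ℤ)}
          = Set.Ioo (0:ℝ) 1 ∩ {x | Irrational x} := by
        ext x
        simp
      rw [hset] at h0
      rw [h0]
      simp
    have hcomplzero : ν ((Set.Ioo (0:ℝ) 1 ∩ {x | Irrational x})ᶜ) = 0 := by
      rw [measure_compl hIrrMeas (measure_ne_top ν _), measure_univ, hIrrOne, tsub_self]
    have hLzero : ν L = 0 := by
      have hsummand : ∀ i, ν (badSet i) ≤ ENNReal.ofReal (1/((i:ℝ)+1)^2) := nu_badSet_le hν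
      have hsummable : Summable (fun i : ℕ => 1/((i:ℝ)+1)^2) := by
        have h := (summable_nat_add_iff 1).mpr
          (Real.summable_one_div_nat_pow.mpr (by norm_num : 1 < 2))
        refine h.congr fun n => ?_
        push_cast
        ring
      have htsum : ∑' i, ν (badSet i) ≠ ⊤ := by
        refine ne_top_of_le_ne_top ?_ (ENNReal.tsum_le_tsum hsummand)
        rw [← ENNReal.ofReal_tsum_of_nonneg (fun n => by positivity) hsummable]
        exact ENNReal.ofReal_ne_top
      have htail := ENNReal.tendsto_sum_nat_add (fun i => ν (badSet i)) htsum
      refine le_antisymm ?_ zero_le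
      refine ge_of_tendsto htail (Filter.Eventually.of_forall fun N => ?_)
      calc ν L ≤ ν (⋃ k, badSet (k + N)) := measure_mono (Set.iInter_subset _ N)
        _ ≤ ∑' k, ν (badSet (k + N)) := measure_iUnion_le _
    have hsub : Set.Ioo (0:ℝ) 1 \ Z ⊆ L ∪ (Set.Ioo (0:ℝ) 1 ∩ {x | Irrational x})ᶜ := by
      intro x hx
      by_cases hirr : Irrational x
      · left
        by_contra hL'
        exact hx.2 ⟨⟨hx.1, hirr⟩, hL'⟩
      · right
        exact fun h => hirr h.2
    refine le_antisymm ?_ zero_le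
    calc ν (Set.Ioo (0:ℝ) 1 \ Z)
        ≤ ν (L ∪ (Set.Ioo (0:ℝ) 1 ∩ {x | Irrational x})ᶜ) := measure_mono hsub
      _ ≤ ν L + ν ((Set.Ioo (0:ℝ) 1 ∩ {x | Irrational x})ᶜ) := measure_union_le _ _
      _ = 0 := by rw [hLzero, hcomplzero, add_zero]
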